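/- Let r and n be positive integers. Then for every ε ∈ {0,1,…,r−1}^n, the following identity holds in the ring of formal power series in t with coefficients in ℤ[q,u]: (∑_{k ≥ 0} (∑_{v ∈ L_ε(k)} ∏_{i=1}^n m'(v_i, k)) t^k) · ∏_{j=0}^{n} (1 − q^j t) = ∑_{(γ,π) ∈ G_ε} q^{maj(γ,π)} t^{des(γ,π)} u^{col(ε)}. -/

import Mathlib

open Finset

/-- 1-based value of `π` at position `i ∈ {1,…,n}`, with the convention `π(0) = 0`. -/
def wval {n : ℕ} (π : Equiv.Perm (Fin n)) (i : ℕ) : ℕ :=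
  if h : 1 ≤ i ∧ i ≤ n then (π ⟨i - 1, by omega⟩ : ℕ) + 1 else 0

/-- Color at position `i` (1-based), with the convention `ε_0 = 0`. -/
def wcolor {n : ℕ} (ε : Fin n → ℕ) (i : ℕ) : ℕ :=
  if h : 1 ≤ i ∧ i ≤ n then ε ⟨i - 1, by omega⟩ else 0

/-- The Biagioli–Zeng order on colored letters: `(j,c) > (k,d)`. -/
def bzGT (a b : ℕ × ℕ) : Prop :=
  (a.2 = 0 ∧ b.2 = 0 ∧ b.1 < a.1) ∨ (0 < a.2 ∧ 0 < b.2 ∧ a.1 < b.1) ∨ (a.2 = 0 ∧ 0 < b.2)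

instance (a b : ℕ × ℕ) : Decidable (bzGT a b) := by unfold bzGT; exact inferInstance

/-- The descent set `Des(ε,π) ⊆ {0,…,n-1}` of a colored permutation. -/
def DesBZ {n : ℕ} (ε : Fin n → ℕ) (π : Equiv.Perm (Fin n)) : Finset ℕ :=
  (Finset.range n).filter fun i =>
    bzGT (wval π i, wcolor ε i) (wval π (i + 1), wcolor ε (i + 1))

def desBZ {n : ℕ} (ε : Fin n → ℕ) (π : Equiv.Perm (Fin n)) : ℕ := (DesBZ ε π).card

def majBZ {n : ℕ} (ε : Fin n → ℕ) (π : Equiv.Perm (Fin n)) : ℕ := ∑ i ∈ DesBZ ε π, i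

/-- The color weight `col(ε)`. -/
def colwt {n : ℕ} (ε : Fin n → ℕ) : ℕ := ∑ i, ε i

/-- Ordinary descent set `{i ∈ {1,…,n-1} : σ(i) > σ(i+1)}` (1-based). -/
def ordDes {n : ℕ} (σ : Equiv.Perm (Fin n)) : Finset ℕ :=
  (Finset.range n).filter fun i => 1 ≤ i ∧ wval σ (i + 1) < wval σ i

noncomputable def qP : MvPolynomial (Fin 2) ℤ := MvPolynomial.X 0
noncomputable def uP : MvPolynomial (Fin 2) ℤ := MvPolynomial.X 1
noncomputable def qNat (m : ℕ) : MvPolynomial (Fin 2) ℤ := ∑ i ∈ Finset.range m, qP ^ i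
noncomputable def uNat (m : ℕ) : MvPolynomial (Fin 2) ℤ := ∑ i ∈ Finset.range m, uP ^ i

/-- The monomial `m'(j,k)`. -/
noncomputable def mPrime (j k : ℕ) : MvPolynomial (Fin 2) ℤ :=
  if j ≤ k then qP ^ j else qP ^ ((j - 1) % k) * uP ^ ((j - 1) / k)

/-- Lattice points of `cone(F_ε)` at height `k`. -/
def Lset {n : ℕ} (ε : Fin n → ℕ) (k : ℕ) : Finset (Fin n → ℕ) :=
  Fintype.piFinset fun i =>
    if 0 < ε i then Finset.Ioc (k * ε i) (k * (ε i + 1)) else Finset.Icc 0 k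

-- ==================== auxiliary development ====================
namespace ConeGF
open PowerSeries

abbrev R2 := MvPolynomial (Fin 2) ℤ

/-- positionwise sequence with boundary value `k` at position `0`. -/
def Aseq {n : ℕ} (k : ℕ) (l : Fin n → ℕ) (p : ℕ) : ℕ :=
  if h : 1 ≤ p ∧ p ≤ n then l ⟨p - 1, by omega⟩ else k

lemma Aseq_zero {n k : ℕ} (l : Fin n → ℕ) : Aseq k l 0 = k := by simp [Aseq]

lemma Aseq_fin {n k : ℕ} (l : Fin n → ℕ) (t : Fin n) : Aseq k l ((t : ℕ) + 1) = l t := by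
  have := t.isLt
  simp [Aseq, Nat.succ_le_of_lt this]

lemma Aseq_le {n k : ℕ} (l : Fin n → ℕ) (h : ∀ i < n, Aseq k l (i+1) ≤ Aseq k l i) :
    ∀ p q, p ≤ q → q ≤ n → Aseq k l q ≤ Aseq k l p := by
  intro p q hpq hq
  induction q with
  | zero => interval_cases p; exact le_refl _
  | succ q ih =>
      rcases Nat.lt_or_ge p (q+1) with hp | hp
      · exact le_trans (h q (by omega)) (ih (by omega) (by omega))
      · have : p = q + 1 := by omega
        subst this; exact le_refl _

end ConeGF

-- appended
namespace ConeGF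

lemma enc_le {x y u v N : ℕ} (hu : u < N) (hv : v < N) (h : x*N+u ≤ y*N+v) : x ≤ y := by
  by_contra hc
  have h1 : y + 1 ≤ x := by omega
  have h2 : (y+1)*N ≤ x*N := Nat.mul_le_mul_right N h1
  have h3 : y*N + N = (y+1)*N := by ring
  omega

lemma enc_lt_of_lt {x y u v N : ℕ} (hu : u < N) (h : x < y) : x*N+u < y*N+v := by
  have h2 : (x+1)*N ≤ y*N := Nat.mul_le_mul_right N h
  have h3 : x*N + N = (x+1)*N := by ring
  omega

lemma enc_le_same {x u v N : ℕ} (h : x*N+u ≤ x*N+v) : u ≤ v := by omega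

def keyf {n : ℕ} (ε : Fin n → ℕ) (a : Fin n) : ℕ := if ε a = 0 then n + a else n - 1 - a

lemma keyf_lt {n : ℕ} (ε : Fin n → ℕ) (a : Fin n) : keyf ε a < 2*n := by
  have := a.isLt; unfold keyf; split <;> omega

lemma bzGT_iff_keyf {n : ℕ} (ε : Fin n → ℕ) (a b : Fin n) :
    bzGT ((a:ℕ)+1, ε a) ((b:ℕ)+1, ε b) ↔ keyf ε b < keyf ε a := by
  have ha := a.isLt; have hb := b.isLt
  unfold bzGT keyf
  by_cases h1 : ε a = 0 <;> by_cases h2 : ε b = 0 <;> simp [h1, h2] <;> omega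

lemma bzGT_zero_iff {n : ℕ} (ε : Fin n → ℕ) (b : Fin n) :
    bzGT (0, 0) ((b:ℕ)+1, ε b) ↔ 0 < ε b := by
  unfold bzGT; simp

end ConeGF
namespace ConeGF

lemma wpair {n : ℕ} (ε : Fin n → ℕ) (π : Equiv.Perm (Fin n)) (m : ℕ) (hm : m < n) :
    (wval π (m+1), wcolor (fun t => ε (π t)) (m+1))
      = ((π ⟨m, hm⟩ : ℕ) + 1, ε (π ⟨m, hm⟩)) := by
  simp [wval, wcolor, Nat.succ_le_of_lt hm]

lemma mem_DesBZ_zero {n : ℕ} (ε : Fin n → ℕ) (π : Equiv.Perm (Fin n)) (hn : 0 < n) :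
    0 ∈ DesBZ (fun t => ε (π t)) π ↔ 0 < ε (π ⟨0, hn⟩) := by
  rw [DesBZ, mem_filter, mem_range]
  have h0 : wval π 0 = 0 := by simp [wval]
  have hc0 : wcolor (fun t => ε (π t)) 0 = 0 := by simp [wcolor]
  rw [h0, hc0, show (0+1 : ℕ) = 0 + 1 from rfl, wpair ε π 0 hn, bzGT_zero_iff]
  simp [hn]

lemma mem_DesBZ_succ {n : ℕ} (ε : Fin n → ℕ) (π : Equiv.Perm (Fin n)) (i : ℕ) (hi : i + 1 < n) :
    (i+1) ∈ DesBZ (fun t => ε (π t)) π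
      ↔ keyf ε (π ⟨i+1, hi⟩) < keyf ε (π ⟨i, by omega⟩) := by
  rw [DesBZ, mem_filter, mem_range]
  rw [wpair ε π i (by omega), wpair ε π (i+1) hi, bzGT_iff_keyf]
  simp [hi]

lemma mono_adj {N : ℕ} {g : Fin N → ℕ}
    (h : ∀ i : ℕ, ∀ hi : i + 1 < N, g ⟨i, by omega⟩ ≤ g ⟨i+1, hi⟩) : Monotone g := by
  intro a b hab
  have hab' : (a:ℕ) ≤ (b:ℕ) := hab
  have key : ∀ d : ℕ, ∀ b : Fin N, (b:ℕ) = (a:ℕ) + d → g a ≤ g b := by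
    intro d
    induction d with
    | zero => intro b hb; have : a = b := Fin.ext (by omega); subst this; exact le_refl _
    | succ d ih =>
        intro b hb
        have hb' := b.isLt
        have hd' : (a:ℕ) + d < N := by omega
        have h1 : g a ≤ g ⟨(a:ℕ)+d, hd'⟩ := ih ⟨(a:ℕ)+d, hd'⟩ rfl
        have h2 : g ⟨(a:ℕ)+d, hd'⟩ ≤ g ⟨(a:ℕ)+d+1, by omega⟩ := h ((a:ℕ)+d) (by omega)
        have hbe : b = (⟨(a:ℕ)+d+1, by omega⟩ : Fin N) := Fin.ext (by simp only [Fin.val_mk]; omega)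
        rw [hbe]; exact le_trans h1 h2
  exact key ((b:ℕ) - (a:ℕ)) b (by omega)

open PowerSeries in
noncomputable def Gs (j : ℕ) : PowerSeries R2 := PowerSeries.mk fun m => qP ^ (j * m)

open PowerSeries in
lemma one_sub_mul_Gs (j : ℕ) :
    (1 - PowerSeries.C (R := R2) (qP ^ j) * PowerSeries.X) * Gs j = 1 := by
  refine PowerSeries.ext fun m => ?_
  rw [sub_mul, one_mul, map_sub]
  rcases Nat.eq_zero_or_pos m with rfl | hm
  · simp [Gs, coeff_mk]
  · obtain ⟨m', rfl⟩ : ∃ m', m = m' + 1 := ⟨m - 1, by omega⟩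
    have h1 : (coeff (R := R2) (m'+1)) (Gs j) = qP ^ (j*(m'+1)) := coeff_mk _ _
    have h2 : (C (R := R2) (qP^j) * X) * Gs j = C (R := R2) (qP^j) * (X * Gs j) := by ring
    rw [h1, h2, coeff_C_mul]
    have h3 : (coeff (R := R2) (m'+1)) (X * Gs j) = (coeff (R := R2) m') (Gs j) := by
      have := coeff_X_pow_mul (Gs j) 1 m'
      simpa using this
    rw [h3, show (PowerSeries.coeff (R := R2) m') (Gs j) = qP ^ (j*m') from coeff_mk _ _]
    have h4 : qP ^ j * qP ^ (j * m') = qP ^ (j*(m'+1)) := by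
      rw [← pow_add]; ring_nf
    rw [h4, sub_self]
    simp

end ConeGF
namespace ConeGF
open PowerSeries

lemma Aseq_nat {n k : ℕ} (l : Fin n → ℕ) (i : ℕ) (hi : i < n) :
    Aseq k l (i+1) = l ⟨i, hi⟩ := by
  simp [Aseq, Nat.succ_le_of_lt hi]

def Mset (n M : ℕ) : Finset (Fin n → ℕ) :=
  (Fintype.piFinset fun _ => Finset.range (M+1)).filter fun μ =>
    ∀ i < n, Aseq M μ (i+1) ≤ Aseq M μ i

noncomputable def Tfun (n M : ℕ) : R2 := ∑ μ ∈ Mset n M, qP ^ (∑ t, μ t)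

lemma mem_Mset_iff {n M : ℕ} (μ : Fin n → ℕ) :
    μ ∈ Mset n M ↔ (∀ t, μ t ≤ M) ∧
      ∀ i : ℕ, ∀ hi : i + 1 < n, μ ⟨i+1, hi⟩ ≤ μ ⟨i, by omega⟩ := by
  rw [Mset, mem_filter, Fintype.mem_piFinset]
  constructor
  · rintro ⟨h1, h2⟩
    refine ⟨fun t => by have := h1 t; simp [mem_range] at this; omega, fun i hi => ?_⟩
    have := h2 (i+1) hi
    rwa [Aseq_nat μ (i+1) hi, Aseq_nat μ i (by omega)] at this
  · rintro ⟨h1, h2⟩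
    refine ⟨fun t => by simp [mem_range]; exact h1 t, fun i hi => ?_⟩
    rcases i with _ | j
    · rw [Aseq_nat μ 0 hi, Aseq_zero]; exact h1 _
    · rw [Aseq_nat μ (j+1) hi, Aseq_nat μ j (by omega)]; exact h2 j hi

lemma Mset_anti {n M : ℕ} {μ : Fin n → ℕ} (h : μ ∈ Mset n M) :
    ∀ a b : Fin n, a ≤ b → μ b ≤ μ a := by
  intro a b hab
  have hc := (mem_filter.mp h).2
  have := Aseq_le (k := M) μ hc ((a:ℕ)+1) ((b:ℕ)+1) (by
    have : (a:ℕ) ≤ (b:ℕ) := hab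
    omega) (Nat.succ_le_of_lt b.isLt)
  rwa [Aseq_nat μ a a.isLt, Aseq_nat μ b b.isLt, Fin.eta, Fin.eta] at this

lemma Tfun_zero (M : ℕ) : Tfun 0 M = 1 := by
  have h : Mset 0 M = {fun t : Fin 0 => (0:ℕ)} := by
    apply Finset.ext; intro μ
    simp only [mem_Mset_iff, Finset.mem_singleton]
    constructor
    · intro _; funext t; exact t.elim0
    · intro h; subst h; exact ⟨fun t => t.elim0, fun i hi => by omega⟩
  rw [Tfun, h, Finset.sum_singleton]
  simp

lemma fiber_sum (n M s : ℕ) (hs : s ≤ M) :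
    ∑ μ ∈ (Mset (n+1) M).filter (fun μ => μ (Fin.last n) = s), qP ^ (∑ t, μ t)
      = qP ^ ((n+1)*s) * Tfun n (M - s) := by
  rw [Tfun, Finset.mul_sum]
  refine Finset.sum_nbij' (i := fun μ (t : Fin n) => μ (Fin.castSucc t) - s)
    (j := fun ν (t : Fin (n+1)) => if h : (t:ℕ) < n then ν ⟨t, h⟩ + s else s)
    ?_ ?_ ?_ ?_ ?_
  · intro μ hμ
    obtain ⟨hM, hlast⟩ := mem_filter.mp hμ
    have hanti := Mset_anti hM
    have hge : ∀ t : Fin (n+1), s ≤ μ t := fun t => by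
      rw [← hlast]; exact hanti t (Fin.last n) (Fin.le_last t)
    have hle : ∀ t, μ t ≤ M := (mem_Mset_iff μ).mp hM |>.1
    rw [mem_Mset_iff]
    constructor
    · intro t
      beta_reduce
      have := hle (Fin.castSucc t); have := hge (Fin.castSucc t); omega
    · intro i hi
      beta_reduce
      have h2 : μ (Fin.castSucc ⟨i+1, hi⟩) ≤ μ (Fin.castSucc ⟨i, by omega⟩) := by
        apply hanti
        simp [Fin.le_def]
      omega
  · intro ν hν
    obtain ⟨hle, hadj⟩ := (mem_Mset_iff ν).mp hν
    beta_reduce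
    rw [mem_filter]
    constructor
    · rw [mem_Mset_iff]
      constructor
      · intro t
        by_cases h : (t:ℕ) < n
        · rw [dif_pos h]; have := hle ⟨t, h⟩; omega
        · rw [dif_neg h]; omega
      · intro i hi
        simp only [Fin.val_mk]
        by_cases h : i + 1 < n
        · rw [dif_pos h, dif_pos (by omega)]
          have := hadj i h
          omega
        · rw [dif_neg h]
          by_cases h' : i < n
          · rw [dif_pos h']; omega
          · rw [dif_neg h']
    · have : ¬ ((Fin.last n : Fin (n+1)) : ℕ) < n := by simp
      simp only [dif_neg this]
  · intro μ hμ
    obtain ⟨hM, hlast⟩ := mem_filter.mp hμ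
    have hanti := Mset_anti hM
    have hge : ∀ t : Fin (n+1), s ≤ μ t := fun t => by
      rw [← hlast]; exact hanti t (Fin.last n) (Fin.le_last t)
    funext t
    beta_reduce
    by_cases h : (t:ℕ) < n
    · rw [dif_pos h]
      have he : Fin.castSucc (⟨(t:ℕ), h⟩ : Fin n) = t := Fin.ext (by simp)
      rw [he]
      have := hge t; omega
    · rw [dif_neg h]
      have he : t = Fin.last n := Fin.ext (by have := t.isLt; simp; omega)
      rw [he, hlast]
  · intro ν hν
    funext t
    beta_reduce
    have h : ((Fin.castSucc t : Fin (n+1)) : ℕ) < n := by simp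
    rw [dif_pos h]
    have he : (⟨((Fin.castSucc t : Fin (n+1)) : ℕ), h⟩ : Fin n) = t := Fin.ext (by simp)
    rw [he]
    omega
  · intro μ hμ
    obtain ⟨hM, hlast⟩ := mem_filter.mp hμ
    have hanti := Mset_anti hM
    have hge : ∀ t : Fin (n+1), s ≤ μ t := fun t => by
      rw [← hlast]; exact hanti t (Fin.last n) (Fin.le_last t)
    have hsum : ∑ t : Fin (n+1), μ t
        = (n+1)*s + ∑ t : Fin n, (μ (Fin.castSucc t) - s) := by
      rw [Fin.sum_univ_castSucc, hlast]
      have : ∀ t : Fin n, μ (Fin.castSucc t) = (μ (Fin.castSucc t) - s) + s := by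
        intro t; have := hge (Fin.castSucc t); omega
      rw [Finset.sum_congr rfl (fun t _ => this t), Finset.sum_add_distrib,
        Finset.sum_const, Finset.card_univ, Fintype.card_fin, smul_eq_mul]
      ring
    rw [hsum, pow_add]

lemma Tfun_succ (n M : ℕ) :
    Tfun (n+1) M = ∑ p ∈ Finset.HasAntidiagonal.antidiagonal M, Tfun n p.1 * qP ^ ((n+1) * p.2) := by
  have hmaps : ∀ μ ∈ Mset (n+1) M, μ (Fin.last n) ∈ range (M+1) := by
    intro μ hμ
    rw [mem_range]
    exact Nat.lt_succ_of_le (((mem_Mset_iff μ).mp hμ).1 _)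
  rw [Tfun, ← Finset.sum_fiberwise_of_maps_to hmaps]
  rw [Finset.sum_congr rfl (fun s hs => fiber_sum n M s (by rw [mem_range] at hs; omega))]
  calc ∑ s ∈ range (M+1), qP^((n+1)*s) * Tfun n (M-s)
      = ∑ s ∈ range (M+1), (fun k => Tfun n k * qP^((n+1)*(M-k))) (M+1-1-s) := by
        refine Finset.sum_congr rfl (fun s hs => ?_)
        rw [mem_range] at hs
        beta_reduce
        rw [show M+1-1-s = M - s by omega, show M-(M-s)=s by omega]
        ring
    _ = ∑ k ∈ range (M+1), Tfun n k * qP^((n+1)*(M-k)) := by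
        rw [Finset.sum_range_reflect (fun k => Tfun n k * qP ^ ((n+1)*(M-k))) (M+1)]
    _ = ∑ p ∈ Finset.HasAntidiagonal.antidiagonal M, Tfun n p.1 * qP ^ ((n+1) * p.2) := by
        rw [Finset.Nat.sum_antidiagonal_eq_sum_range_succ_mk
          (fun p => Tfun n p.1 * qP ^ ((n+1) * p.2)) M]

end ConeGF
namespace ConeGF
open PowerSeries

lemma prod_Gs (n : ℕ) :
    ∏ j ∈ range (n+1), Gs j = PowerSeries.mk fun M => Tfun n M := by
  induction n with
  | zero =>
      rw [Finset.prod_range_one]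
      refine PowerSeries.ext fun M => ?_
      rw [show (coeff (R := R2) M) (Gs 0) = qP ^ (0*M) from coeff_mk _ _, coeff_mk, Tfun_zero]
      simp
  | succ n ih =>
      rw [Finset.prod_range_succ, ih]
      refine PowerSeries.ext fun M => ?_
      rw [coeff_mul, coeff_mk, Tfun_succ]
      refine Finset.sum_congr rfl fun p hp => ?_
      rw [coeff_mk, show (coeff (R := R2) p.2) (Gs (n+1)) = qP ^ ((n+1)*p.2) from coeff_mk _ _]

end ConeGF
namespace ConeGF

def Box {n : ℕ} (ε : Fin n → ℕ) (k : ℕ) : Finset (Fin n → ℕ) :=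
  Fintype.piFinset fun i => if 0 < ε i then Finset.range k else Finset.range (k+1)

lemma mPrime_colored {c f k : ℕ} (hc : 0 < c) (hf : f < k) :
    mPrime (k*c + 1 + f) k = qP ^ f * uP ^ c := by
  have hk : 0 < k := by omega
  have hkc : k ≤ k * c := Nat.le_mul_of_pos_right k hc
  rw [mPrime, if_neg (by omega)]
  have e1 : k*c + 1 + f - 1 = f + c*k := by
    have : k*c + 1 + f = (f + c*k) + 1 := by ring
    rw [this, Nat.add_sub_cancel]
  rw [e1, Nat.add_mul_mod_self_right, Nat.mod_eq_of_lt hf,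
    Nat.add_mul_div_right f c hk, Nat.div_eq_of_lt hf, Nat.zero_add]

lemma mPrime_uncolored {f k : ℕ} (hf : f ≤ k) : mPrime f k = qP ^ f := if_pos hf

lemma step1 {n : ℕ} (ε : Fin n → ℕ) (k : ℕ) :
    ∑ v ∈ Lset ε k, ∏ i, mPrime (v i) k
      = uP ^ colwt ε * ∑ f ∈ Box ε k, qP ^ (∑ i, f i) := by
  have main : ∑ v ∈ Lset ε k, ∏ i, mPrime (v i) k
      = ∑ f ∈ Box ε k, ∏ i, (qP ^ f i * uP ^ ε i) := by
    refine Finset.sum_nbij'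
      (i := fun v (t : Fin n) => v t - (if 0 < ε t then k * ε t + 1 else 0))
      (j := fun f (t : Fin n) => f t + (if 0 < ε t then k * ε t + 1 else 0))
      ?_ ?_ ?_ ?_ ?_
    · intro v hv
      rw [Box, Fintype.mem_piFinset]
      rw [Lset, Fintype.mem_piFinset] at hv
      intro t
      beta_reduce
      have := hv t
      by_cases h : 0 < ε t
      · simp only [if_pos h] at this ⊢
        rw [Finset.mem_Ioc] at this
        rw [mem_range]
        have hk1 : k * (ε t + 1) = k * ε t + k := by ring
        omega
      · simp only [if_neg h] at this ⊢
        rw [Finset.mem_Icc] at this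
        rw [mem_range]
        omega
    · intro f hf
      rw [Lset, Fintype.mem_piFinset]
      rw [Box, Fintype.mem_piFinset] at hf
      intro t
      beta_reduce
      have := hf t
      by_cases h : 0 < ε t
      · simp only [if_pos h] at this ⊢
        rw [mem_range] at this
        rw [Finset.mem_Ioc]
        have hk1 : k * (ε t + 1) = k * ε t + k := by ring
        omega
      · simp only [if_neg h] at this ⊢
        rw [mem_range] at this
        rw [Finset.mem_Icc]
        omega
    · intro v hv
      rw [Lset, Fintype.mem_piFinset] at hv
      funext t
      beta_reduce
      have := hv t
      by_cases h : 0 < ε t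
      · simp only [if_pos h] at this ⊢
        rw [Finset.mem_Ioc] at this
        omega
      · rw [if_neg h]
        omega
    · intro f hf
      funext t
      beta_reduce
      omega
    · intro v hv
      rw [Lset, Fintype.mem_piFinset] at hv
      refine Finset.prod_congr rfl fun t _ => ?_
      beta_reduce
      have := hv t
      by_cases h : 0 < ε t
      · simp only [if_pos h] at this ⊢
        rw [Finset.mem_Ioc] at this
        have hk : k * (ε t + 1) = k * ε t + k := by ring
        have hv2 : v t = k * ε t + 1 + (v t - (k * ε t + 1)) := by omega
        rw [hv2, mPrime_colored h (by omega)]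
        have e2 : k * ε t + 1 + (v t - (k * ε t + 1)) - (k * ε t + 1)
            = v t - (k * ε t + 1) := by omega
        rw [e2]
      · simp only [if_neg h] at this ⊢
        rw [Finset.mem_Icc] at this
        have h0 : ε t = 0 := by omega
        rw [Nat.sub_zero, mPrime_uncolored this.2, h0, pow_zero, mul_one]
  rw [main]
  rw [Finset.mul_sum]
  refine Finset.sum_congr rfl fun f _ => ?_
  rw [Finset.prod_mul_distrib, Finset.prod_pow_eq_pow_sum, Finset.prod_pow_eq_pow_sum]
  rw [colwt]
  ring

end ConeGF
namespace ConeGF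

lemma enc_add_le {x y u v N : ℕ} (hx : x ≤ y) (huv : u ≤ v) : x*N+u ≤ y*N+v :=
  Nat.add_le_add (Nat.mul_le_mul_right N hx) huv

lemma keyf_inj {n : ℕ} (ε : Fin n → ℕ) {a b : Fin n} (h : keyf ε a = keyf ε b) : a = b := by
  have ha := a.isLt; have hb := b.isLt
  unfold keyf at h
  apply Fin.ext
  by_cases h1 : ε a = 0 <;> by_cases h2 : ε b = 0 <;> simp [h1, h2] at h <;> omega

def Lam {n : ℕ} (ε : Fin n → ℕ) (π : Equiv.Perm (Fin n)) (k : ℕ) : Finset (Fin n → ℕ) :=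
  (Fintype.piFinset fun _ => Finset.range (k+1)).filter fun l =>
    (∀ i < n, Aseq k l (i+1) ≤ Aseq k l i) ∧
    (∀ i ∈ DesBZ (fun t => ε (π t)) π, Aseq k l (i+1) < Aseq k l i)

lemma mem_Lam_iff {n : ℕ} {ε : Fin n → ℕ} {π : Equiv.Perm (Fin n)} {k : ℕ} {l : Fin n → ℕ} :
    l ∈ Lam ε π k ↔ (∀ t, l t ≤ k) ∧
      (∀ i < n, Aseq k l (i+1) ≤ Aseq k l i) ∧
      (∀ i ∈ DesBZ (fun t => ε (π t)) π, Aseq k l (i+1) < Aseq k l i) := by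
  rw [Lam, mem_filter, Fintype.mem_piFinset]
  simp only [mem_range]
  constructor
  · rintro ⟨h1, h2, h3⟩; exact ⟨fun t => by have := h1 t; omega, h2, h3⟩
  · rintro ⟨h1, h2, h3⟩; exact ⟨fun t => by have := h1 t; omega, h2, h3⟩

def gk {n : ℕ} (ε : Fin n → ℕ) (k : ℕ) (f : Fin n → ℕ) : Fin n → ℕ :=
  fun i => (k - f i) * (2*n) + keyf ε i

lemma mem_Box_iff {n : ℕ} {ε : Fin n → ℕ} {k : ℕ} {f : Fin n → ℕ} :
    f ∈ Box ε k ↔ ∀ t, f t ≤ k ∧ (0 < ε t → f t < k) := by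
  rw [Box, Fintype.mem_piFinset]
  constructor
  · intro h t
    have := h t
    by_cases hc : 0 < ε t
    · simp only [if_pos hc, mem_range] at this; exact ⟨by omega, fun _ => this⟩
    · simp only [if_neg hc, mem_range] at this; exact ⟨by omega, fun h' => absurd h' hc⟩
  · intro h t
    have := h t
    by_cases hc : 0 < ε t
    · simp only [if_pos hc, mem_range]; exact this.2 hc
    · simp only [if_neg hc, mem_range]; omega

lemma step2 {n : ℕ} (ε : Fin n → ℕ) (hn : 0 < n) (k : ℕ) :
    ∑ f ∈ Box ε k, qP ^ (∑ i, f i)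
      = ∑ π : Equiv.Perm (Fin n), ∑ l ∈ Lam ε π k, qP ^ (∑ i, l i) := by
  have hsig := Finset.sum_sigma (Finset.univ : Finset (Equiv.Perm (Fin n)))
    (fun π => Lam ε π k) (fun x => qP ^ (∑ i, x.2 i))
  rw [← hsig]
  have h2n : ∀ (a : Fin n), keyf ε a < 2*n := keyf_lt ε
  refine Finset.sum_nbij'
    (i := fun f => (⟨Tuple.sort (gk ε k f), fun t => f (Tuple.sort (gk ε k f) t)⟩ :
        Σ _ : Equiv.Perm (Fin n), Fin n → ℕ))
    (j := fun x => fun i => x.2 (x.1⁻¹ i)) ?_ ?_ ?_ ?_ ?_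
  · -- forward membership
    intro f hf
    obtain hB := mem_Box_iff.mp hf
    set σ := Tuple.sort (gk ε k f) with hσdef
    have hmono := Tuple.monotone_sort (gk ε k f)
    -- adjacent decrease of f ∘ σ
    have hdec : ∀ i : ℕ, ∀ hi : i + 1 < n, f (σ ⟨i+1, hi⟩) ≤ f (σ ⟨i, by omega⟩) := by
      intro i hi
      have h1 : gk ε k f (σ ⟨i, by omega⟩) ≤ gk ε k f (σ ⟨i+1, hi⟩) :=
        hmono (by simp [Fin.le_def])
      unfold gk at h1
      have h2 : k - f (σ ⟨i, by omega⟩) ≤ k - f (σ ⟨i+1, hi⟩) :=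
        enc_le (h2n _) (h2n _) h1
      have := (hB (σ ⟨i, by omega⟩)).1
      have := (hB (σ ⟨i+1, hi⟩)).1
      omega
    have hstrict : ∀ i : ℕ, ∀ hi : i + 1 < n,
        keyf ε (σ ⟨i+1, hi⟩) < keyf ε (σ ⟨i, by omega⟩) →
        f (σ ⟨i+1, hi⟩) < f (σ ⟨i, by omega⟩) := by
      intro i hi hkey
      have h1 : gk ε k f (σ ⟨i, by omega⟩) ≤ gk ε k f (σ ⟨i+1, hi⟩) :=
        hmono (by simp [Fin.le_def])
      unfold gk at h1
      have h2 : k - f (σ ⟨i, by omega⟩) ≤ k - f (σ ⟨i+1, hi⟩) :=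
        enc_le (h2n _) (h2n _) h1
      have h3 : k - f (σ ⟨i, by omega⟩) ≠ k - f (σ ⟨i+1, hi⟩) := by
        intro he
        rw [he] at h1
        have := enc_le_same h1
        omega
      have := (hB (σ ⟨i, by omega⟩)).1
      have := (hB (σ ⟨i+1, hi⟩)).1
      omega
    rw [Finset.mem_sigma]
    refine ⟨Finset.mem_univ _, ?_⟩
    rw [mem_Lam_iff]
    refine ⟨fun t => (hB (σ t)).1, ?_, ?_⟩
    · intro i hi
      rcases i with _ | j
      · rw [Aseq_nat _ 0 hi, Aseq_zero]; exact (hB _).1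
      · rw [Aseq_nat _ (j+1) hi, Aseq_nat _ j (by omega)]
        exact hdec j hi
    · intro i hiD
      have hin : i < n := by
        have := (mem_filter.mp hiD).1; rwa [mem_range] at this
      rcases i with _ | j
      · rw [Aseq_nat _ 0 hin, Aseq_zero]
        have hcol := (mem_DesBZ_zero ε σ hn).mp hiD
        exact (hB _).2 hcol
      · rw [Aseq_nat _ (j+1) hin, Aseq_nat _ j (by omega)]
        exact hstrict j hin ((mem_DesBZ_succ ε σ j hin).mp hiD)
  · -- backward membership
    rintro ⟨π, l⟩ hx
    rw [Finset.mem_sigma] at hx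
    dsimp only at hx
    obtain ⟨hle, hweak, hstrict⟩ := mem_Lam_iff.mp hx.2
    have colored_lt : ∀ m : ℕ, ∀ hm : m < n, 0 < ε (π ⟨m, hm⟩) → l ⟨m, hm⟩ < k := by
      intro m
      induction m with
      | zero =>
          intro hm hcol
          have h0 : 0 ∈ DesBZ (fun t => ε (π t)) π := (mem_DesBZ_zero ε π hn).mpr hcol
          have := hstrict 0 h0
          rwa [Aseq_nat _ 0 hm, Aseq_zero] at this
      | succ m ih =>
          intro hm hcol
          by_cases hc : 0 < ε (π ⟨m, by omega⟩)
          · have h1 := ih (by omega) hc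
            have h2 := hweak (m+1) hm
            rw [Aseq_nat _ (m+1) hm, Aseq_nat _ m (by omega)] at h2
            omega
          · have hdes : (m+1) ∈ DesBZ (fun t => ε (π t)) π := by
              rw [mem_DesBZ_succ ε π m hm]
              have h1 := (π ⟨m+1, hm⟩).isLt
              have h2 := (π ⟨m, by omega⟩ : Fin n).isLt
              unfold keyf
              rw [if_neg (by omega), if_pos (by omega)]
              omega
            have h3 := hstrict (m+1) hdes
            rw [Aseq_nat _ (m+1) hm, Aseq_nat _ m (by omega)] at h3
            have := hle ⟨m, by omega⟩
            omega
    rw [mem_Box_iff]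
    intro t
    beta_reduce
    have happ : π (π⁻¹ t) = t := π.apply_symm_apply t
    constructor
    · exact hle _
    · intro hcol
      have := colored_lt (π⁻¹ t : Fin n).1 (π⁻¹ t).isLt
      rw [Fin.eta] at this
      apply this
      rw [happ]
      exact hcol
  · -- left inverse
    intro f hf
    funext t
    dsimp only
    simp only [Equiv.Perm.coe_inv, Equiv.apply_symm_apply]
  · -- right inverse
    rintro ⟨π, l⟩ hx
    rw [Finset.mem_sigma] at hx
    dsimp only at hx
    obtain ⟨hle, hweak, hstrict⟩ := mem_Lam_iff.mp hx.2
    set f : Fin n → ℕ := fun i => l (π⁻¹ i) with hfdef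
    have hfπ : ∀ t, f (π t) = l t := by intro t; simp [hfdef]
    have hσ : Tuple.sort (gk ε k f) = π := by
      symm
      rw [Tuple.eq_sort_iff]
      constructor
      · apply mono_adj
        intro i hi
        beta_reduce
        show gk ε k f (π ⟨i, by omega⟩) ≤ gk ε k f (π ⟨i+1, hi⟩)
        unfold gk
        rw [hfπ, hfπ]
        by_cases hd : (i+1) ∈ DesBZ (fun t => ε (π t)) π
        · have h1 := hstrict (i+1) hd
          rw [Aseq_nat _ (i+1) hi, Aseq_nat _ i (by omega)] at h1
          have := hle (⟨i, by omega⟩ : Fin n)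
          have := hle (⟨i+1, hi⟩ : Fin n)
          exact le_of_lt (enc_lt_of_lt (h2n _) (by omega))
        · have h1 := hweak (i+1) hi
          rw [Aseq_nat _ (i+1) hi, Aseq_nat _ i (by omega)] at h1
          rw [mem_DesBZ_succ ε π i hi] at hd
          push_neg at hd
          exact enc_add_le (by omega) hd
      · intro a b hab heq
        exfalso
        unfold gk at heq
        have hx1 : k - f (π a) ≤ k - f (π b) := enc_le (h2n _) (h2n _) (le_of_eq heq)
        have hx2 : k - f (π b) ≤ k - f (π a) := enc_le (h2n _) (h2n _) (le_of_eq heq.symm)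
        have hx3 : k - f (π a) = k - f (π b) := le_antisymm hx1 hx2
        rw [hx3] at heq
        have hkey : keyf ε (π a) = keyf ε (π b) := by omega
        have : π a = π b := keyf_inj ε hkey
        have : a = b := π.injective this
        omega
    refine Sigma.ext ?_ ?_
    · exact hσ
    · apply heq_of_eq
      show (fun t => f (Tuple.sort (gk ε k f) t)) = l
      rw [hσ]
      funext t
      exact hfπ t
  · -- weights
    intro f hf
    beta_reduce
    congr 1
    exact (Equiv.sum_comp (Tuple.sort (gk ε k f)) f).symm

end ConeGF
namespace ConeGF

def eD (D : Finset ℕ) (p : ℕ) : ℕ := (D.filter fun i => p ≤ i).card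

lemma eD_zero (D : Finset ℕ) : eD D 0 = D.card := by
  rw [eD, Finset.filter_true_of_mem (fun i _ => Nat.zero_le i)]

lemma eD_succ (D : Finset ℕ) (p : ℕ) :
    eD D p = eD D (p+1) + (if p ∈ D then 1 else 0) := by
  rw [eD, eD, Finset.card_filter, Finset.card_filter]
  have h : ∀ i ∈ D, (if p ≤ i then 1 else 0)
      = (if p+1 ≤ i then 1 else 0) + (if i = p then 1 else 0) := by
    intro i _; split_ifs <;> omega
  rw [Finset.sum_congr rfl h, Finset.sum_add_distrib]
  have h2 : ∑ i ∈ D, (if i = p then 1 else 0) = if p ∈ D then 1 else 0 :=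
    Finset.sum_ite_eq' D p (fun _ => 1)
  rw [h2]

lemma eD_top {n : ℕ} (D : Finset ℕ) (hD : ∀ i ∈ D, i < n) : eD D n = 0 := by
  rw [eD, Finset.card_eq_zero, Finset.filter_false_of_mem]
  intro i hi
  have := hD i hi
  omega

lemma eD_anti (D : Finset ℕ) {p q : ℕ} (h : p ≤ q) : eD D q ≤ eD D p := by
  apply Finset.card_le_card
  intro x hx
  rw [Finset.mem_filter] at hx ⊢
  exact ⟨hx.1, le_trans h hx.2⟩

lemma eD_le_A {n k : ℕ} (l : Fin n → ℕ) (D : Finset ℕ) (hD : ∀ i ∈ D, i < n)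
    (h1 : ∀ i < n, Aseq k l (i+1) ≤ Aseq k l i)
    (h2 : ∀ i ∈ D, Aseq k l (i+1) < Aseq k l i) :
    ∀ p ≤ n, eD D p ≤ Aseq k l p := by
  have aux : ∀ m p, p + m = n → eD D p ≤ Aseq k l p := by
    intro m
    induction m with
    | zero =>
        intro p hp
        rw [show p = n by omega, eD_top D hD]
        omega
    | succ m ih =>
        intro p hp
        have hpn : p < n := by omega
        have h3 := ih (p+1) (by omega)
        have h4 := eD_succ D p
        by_cases hmem : p ∈ D
        · have := h2 p hmem
          rw [if_pos hmem] at h4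
          omega
        · have := h1 p hpn
          rw [if_neg hmem] at h4
          omega
  intro p hp
  exact aux (n - p) p (by omega)

lemma sum_eD {n : ℕ} (D : Finset ℕ) (hD : ∀ i ∈ D, i < n) :
    ∑ t : Fin n, eD D ((t:ℕ)+1) = ∑ i ∈ D, i := by
  unfold eD
  have h1 : ∀ t : Fin n, (D.filter fun i => (t:ℕ)+1 ≤ i).card
      = ∑ i ∈ D, if (t:ℕ)+1 ≤ i then 1 else 0 := fun t => Finset.card_filter _ _
  rw [Finset.sum_congr rfl (fun t _ => h1 t), Finset.sum_comm]
  refine Finset.sum_congr rfl fun i hi => ?_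
  have hin := hD i hi
  have h2 : ∑ t : Fin n, (if (t:ℕ)+1 ≤ i then 1 else 0)
      = ∑ t ∈ range n, (if t+1 ≤ i then 1 else 0) :=
    Fin.sum_univ_eq_sum_range (fun t => if t+1 ≤ i then 1 else 0) n
  rw [h2, ← Finset.card_filter]
  have h3 : (range n).filter (fun t => t+1 ≤ i) = range i := by
    ext x
    simp only [Finset.mem_filter, mem_range]
    omega
  rw [h3, Finset.card_range]

lemma step3 {n : ℕ} (ε : Fin n → ℕ) (π : Equiv.Perm (Fin n)) (k : ℕ) :
    ∑ l ∈ Lam ε π k, qP ^ (∑ i, l i)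
      = if desBZ (fun i => ε (π i)) π ≤ k then
          qP ^ majBZ (fun i => ε (π i)) π * Tfun n (k - desBZ (fun i => ε (π i)) π)
        else 0 := by
  unfold desBZ majBZ
  set D := DesBZ (fun i => ε (π i)) π with hDdef
  have hDlt : ∀ i ∈ D, i < n := fun i hi => by
    have := (mem_filter.mp hi).1; rwa [mem_range] at this
  by_cases hdk : D.card ≤ k
  swap
  · rw [if_neg hdk]
    have hempty : Lam ε π k = ∅ := by
      rw [Finset.eq_empty_iff_forall_notMem]
      intro l hl
      obtain ⟨hle, hweak, hstrict⟩ := mem_Lam_iff.mp hl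
      have h := eD_le_A l D hDlt hweak hstrict 0 (by omega)
      rw [Aseq_zero, eD_zero] at h
      omega
    rw [hempty, Finset.sum_empty]
  · rw [if_pos hdk, Tfun, Finset.mul_sum]
    refine Finset.sum_nbij'
      (i := fun l (t : Fin n) => l t - eD D ((t:ℕ)+1))
      (j := fun μ (t : Fin n) => μ t + eD D ((t:ℕ)+1)) ?_ ?_ ?_ ?_ ?_
    · intro l hl
      obtain ⟨hle, hweak, hstrict⟩ := mem_Lam_iff.mp hl
      have hAe := eD_le_A l D hDlt hweak hstrict
      have hchain : ∀ p ≤ n, Aseq k l p - eD D p ≤ k - D.card := by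
        intro p hp
        induction p with
        | zero => rw [Aseq_zero, eD_zero]
        | succ p ih =>
            have hpn : p < n := by omega
            have h4 := eD_succ D p
            have h5 := ih (by omega)
            have h6 := hAe (p+1) hp
            have h7 := hAe p (by omega)
            by_cases hmem : p ∈ D
            · have := hstrict p hmem
              rw [if_pos hmem] at h4
              omega
            · have := hweak p hpn
              rw [if_neg hmem] at h4
              omega
      rw [mem_Mset_iff]
      constructor
      · intro t
        beta_reduce
        try simp only [Fin.val_mk]
        have := hchain ((t:ℕ)+1) t.isLt
        rw [Aseq_nat l (t:ℕ) t.isLt, Fin.eta] at this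
        exact this
      · intro i hi
        beta_reduce
        try simp only [Fin.val_mk]
        have h4 := eD_succ D (i+1)
        have h5 := hweak (i+1) hi
        rw [Aseq_nat l (i+1) hi, Aseq_nat l i (by omega)] at h5
        have h6 := hAe (i+2) (by omega)
        rw [Aseq_nat l (i+1) hi] at h6
        by_cases hmem : (i+1) ∈ D
        · have := hstrict (i+1) hmem
          rw [Aseq_nat l (i+1) hi, Aseq_nat l i (by omega)] at this
          rw [if_pos hmem] at h4
          omega
        · rw [if_neg hmem] at h4
          omega
    · intro μ hμ
      obtain ⟨hle, hadj⟩ := (mem_Mset_iff μ).mp hμ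
      have hanti1 : ∀ p : ℕ, eD D (p+1) ≤ D.card := by
        intro p
        rw [← eD_zero D]
        exact eD_anti D (by omega)
      rw [mem_Lam_iff]
      refine ⟨?_, ?_, ?_⟩
      · intro t
        beta_reduce
        have := hle t
        have := hanti1 (t:ℕ)
        omega
      · intro i hi
        rcases i with _ | j
        · rw [Aseq_nat _ 0 hi, Aseq_zero]
          beta_reduce
          simp only [Fin.val_mk]
          have := hle ⟨0, hi⟩
          have := hanti1 0
          omega
        · rw [Aseq_nat _ (j+1) hi, Aseq_nat _ j (by omega)]
          beta_reduce
          simp only [Fin.val_mk]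
          have h5 := hadj j hi
          have h6 := eD_succ D (j+1)
          have h7 : eD D (j+2) ≤ eD D (j+1) := eD_anti D (by omega)
          omega
      · intro i hiD
        have hin : i < n := hDlt i hiD
        rcases i with _ | j
        · rw [Aseq_nat _ 0 hin, Aseq_zero]
          beta_reduce
          simp only [Fin.val_mk]
          have := hle ⟨0, hin⟩
          have h4 := eD_succ D 0
          rw [if_pos hiD] at h4
          rw [eD_zero] at h4
          omega
        · rw [Aseq_nat _ (j+1) hin, Aseq_nat _ j (by omega)]
          beta_reduce
          simp only [Fin.val_mk]
          have h5 := hadj j hin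
          have h6 := eD_succ D (j+1)
          rw [if_pos hiD] at h6
          omega
    · intro l hl
      obtain ⟨hle, hweak, hstrict⟩ := mem_Lam_iff.mp hl
      have hAe := eD_le_A l D hDlt hweak hstrict
      funext t
      beta_reduce
      have := hAe ((t:ℕ)+1) t.isLt
      rw [Aseq_nat l (t:ℕ) t.isLt, Fin.eta] at this
      omega
    · intro μ hμ
      funext t
      beta_reduce
      omega
    · intro l hl
      obtain ⟨hle, hweak, hstrict⟩ := mem_Lam_iff.mp hl
      have hAe := eD_le_A l D hDlt hweak hstrict
      have hsum : ∑ t : Fin n, l t = (∑ i ∈ D, i) + ∑ t : Fin n, (l t - eD D ((t:ℕ)+1)) := by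
        have h1 : ∀ t : Fin n, l t = (l t - eD D ((t:ℕ)+1)) + eD D ((t:ℕ)+1) := by
          intro t
          have := hAe ((t:ℕ)+1) t.isLt
          rw [Aseq_nat l (t:ℕ) t.isLt, Fin.eta] at this
          omega
        rw [Finset.sum_congr rfl (fun t _ => h1 t), Finset.sum_add_distrib, sum_eD D hDlt]
        ring
      rw [hsum, pow_add]

end ConeGF

open ConeGF PowerSeries

theorem cone_generating_function (r n : ℕ) (hr : 0 < r) (hn : 0 < n)
    (ε : Fin n → ℕ) (hε : ∀ i, ε i < r) :
    (PowerSeries.mk fun k => ∑ v ∈ Lset ε k, ∏ i, mPrime (v i) k) *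
        ∏ j ∈ Finset.range (n + 1),
          (1 - PowerSeries.C (R := MvPolynomial (Fin 2) ℤ) (qP ^ j) * PowerSeries.X) =
      ∑ π : Equiv.Perm (Fin n),
        PowerSeries.C (R := MvPolynomial (Fin 2) ℤ)
            (qP ^ majBZ (fun i => ε (π i)) π * uP ^ colwt ε) *
          PowerSeries.X ^ desBZ (fun i => ε (π i)) π := by
  have key : (PowerSeries.mk fun k => ∑ v ∈ Lset ε k, ∏ i, mPrime (v i) k)
      = (∑ π : Equiv.Perm (Fin n),
          PowerSeries.C (R := R2) (qP ^ majBZ (fun i => ε (π i)) π * uP ^ colwt ε) *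
            PowerSeries.X ^ desBZ (fun i => ε (π i)) π) * ∏ j ∈ Finset.range (n+1), Gs j := by
    rw [prod_Gs n, Finset.sum_mul]
    refine PowerSeries.ext fun k => ?_
    rw [coeff_mk, map_sum]
    have hterm : ∀ π : Equiv.Perm (Fin n),
        (coeff (R := R2) k) ((PowerSeries.C (R := R2) (qP ^ majBZ (fun i => ε (π i)) π * uP ^ colwt ε) *
            PowerSeries.X ^ desBZ (fun i => ε (π i)) π) * PowerSeries.mk fun M => Tfun n M)
        = (qP ^ majBZ (fun i => ε (π i)) π * uP ^ colwt ε) *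
            (if desBZ (fun i => ε (π i)) π ≤ k then
              Tfun n (k - desBZ (fun i => ε (π i)) π) else 0) := by
      intro π
      rw [mul_assoc, coeff_C_mul, coeff_X_pow_mul']
      split_ifs with h
      · rw [coeff_mk]
      · rfl
    rw [Finset.sum_congr rfl (fun π _ => hterm π)]
    rw [step1 ε k, step2 ε hn k, Finset.mul_sum]
    refine Finset.sum_congr rfl fun π _ => ?_
    rw [step3 ε π k]
    split_ifs with h
    · ring
    · rw [mul_zero, mul_zero]
  rw [key, mul_assoc, ← Finset.prod_mul_distrib]
  have hone : ∀ j ∈ Finset.range (n+1),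
      Gs j * (1 - PowerSeries.C (R := MvPolynomial (Fin 2) ℤ) (qP ^ j) * PowerSeries.X) = 1 :=
    fun j _ => by rw [mul_comm]; exact one_sub_mul_Gs j
  rw [Finset.prod_congr rfl hone, Finset.prod_const_one, mul_one]
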